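/- Let F = ℤ/2ℤ, let n ≥ 2 be an even integer and 0 < κ ≤ n/2 an integer. Let A = {C ⊆ F^n : C is a linear subspace, 1^n ∈ C, C ⊆ C^⊥, dim_F C = κ}, and for x ∈ F^n let A_x = {C ∈ A : x ∈ C^⊥}. Then for any two vectors x, y ∈ F^n with x·x = y·y = 0 and x, y ∉ {0^n, 1^n}, one has |A_x| = |A_y|. -/
import Mathlib

/- STATEMENT 10 (binary balancedness lemma of Calderbank–Shor): for F = ℤ/2ℤ, n even,
   and vectors x, y ∉ {0ⁿ,1ⁿ} with x·x = y·y = 0, the numbers of self-orthogonal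
   κ-dimensional codes C with 1ⁿ ∈ C and x ∈ C^⊥, resp. y ∈ C^⊥, coincide. -/

open scoped BigOperators

noncomputable section

/-- Dot product `x·y = Σᵢ xᵢ yᵢ` in `ℤ/dℤ`. -/
def dotp {d n : ℕ} (x y : Fin n → ZMod d) : ZMod d := ∑ i, x i * y i

/-- `C^⊥ = {y : ∀ x ∈ C, x·y = 0}`. -/
def dualSet {d n : ℕ} (C : Set (Fin n → ZMod d)) : Set (Fin n → ZMod d) :=
  {y | ∀ x ∈ C, dotp x y = 0}

/-- `A = {C : C linear, 1ⁿ ∈ C, C ⊆ C^⊥, dim C = κ}` over `F = ℤ/2ℤ`. -/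
def Aset2 (n κ : ℕ) : Set (Submodule (ZMod 2) (Fin n → ZMod 2)) :=
  {C | (fun _ => (1 : ZMod 2)) ∈ C ∧
    (C : Set (Fin n → ZMod 2)) ⊆ dualSet (C : Set (Fin n → ZMod 2)) ∧
    Module.finrank (ZMod 2) C = κ}

/-- `A_x = {C ∈ A : x ∈ C^⊥}`. -/
def AsetX2 (n κ : ℕ) (x : Fin n → ZMod 2) : Set (Submodule (ZMod 2) (Fin n → ZMod 2)) :=
  {C ∈ Aset2 n κ | x ∈ dualSet (C : Set (Fin n → ZMod 2))}

namespace Stmt10aux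
variable {n : ℕ}

lemma dotp_comm (x y : Fin n → ZMod 2) : dotp x y = dotp y x :=
  Finset.sum_congr rfl fun i _ => mul_comm _ _

lemma dotp_add_left (a b c : Fin n → ZMod 2) : dotp (a + b) c = dotp a c + dotp b c := by
  simp [dotp, add_mul, Finset.sum_add_distrib]

lemma dotp_add_right (a b c : Fin n → ZMod 2) : dotp a (b + c) = dotp a b + dotp a c := by
  simp [dotp, mul_add, Finset.sum_add_distrib]

lemma dotp_smul_left (r : ZMod 2) (a c : Fin n → ZMod 2) : dotp (r • a) c = r * dotp a c := by
  simp [dotp, Finset.mul_sum, mul_assoc]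

lemma dotp_smul_right (r : ZMod 2) (a c : Fin n → ZMod 2) : dotp a (r • c) = r * dotp a c := by
  simp [dotp, Finset.mul_sum]; congr 1; funext i; ring

lemma zmod2_add_self : ∀ a : ZMod 2, a + a = 0 := by decide

lemma zmod2_ne_one : ∀ a : ZMod 2, a ≠ 1 → a = 0 := by decide

lemma zmod2_ne_zero : ∀ a : ZMod 2, a ≠ 0 → a = 1 := by decide

lemma dotp_self_eq (x : Fin n → ZMod 2) : dotp x x = dotp (fun _ => 1) x := by
  have h : ∀ a : ZMod 2, a * a = a := by decide
  simp [dotp, h]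

lemma dotp_single (x : Fin n → ZMod 2) (i : Fin n) :
    dotp x (Pi.single i (1 : ZMod 2)) = x i := by
  simp [dotp, Pi.single_apply, Finset.mul_sum]

/-- Transvection as a linear map. -/
def T (v : Fin n → ZMod 2) : (Fin n → ZMod 2) →ₗ[ZMod 2] (Fin n → ZMod 2) where
  toFun x := x + dotp x v • v
  map_add' a b := by
    simp only [dotp_add_left, add_smul]
    abel
  map_smul' r a := by
    simp only [dotp_smul_left, RingHom.id_apply, mul_smul, smul_add]

lemma T_apply (v x : Fin n → ZMod 2) : T v x = x + dotp x v • v := rfl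

lemma T_T (v : Fin n → ZMod 2) (hv : dotp v v = 0) (x : Fin n → ZMod 2) :
    T v (T v x) = x := by
  simp only [T_apply, dotp_add_left, dotp_smul_left, hv, mul_zero, add_zero, add_smul]
  rw [add_assoc, ← add_smul, zmod2_add_self, zero_smul, add_zero]

/-- Transvection as a linear equivalence. -/
def Te (v : Fin n → ZMod 2) (hv : dotp v v = 0) :
    (Fin n → ZMod 2) ≃ₗ[ZMod 2] (Fin n → ZMod 2) :=
  LinearEquiv.ofLinear (T v) (T v)
    (LinearMap.ext fun x => by simp [T_T v hv]) (LinearMap.ext fun x => by simp [T_T v hv])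

lemma Te_apply (v : Fin n → ZMod 2) (hv : dotp v v = 0) (x : Fin n → ZMod 2) :
    Te v hv x = x + dotp x v • v := rfl

lemma Te_dotp (v : Fin n → ZMod 2) (hv : dotp v v = 0) (a b : Fin n → ZMod 2) :
    dotp (Te v hv a) (Te v hv b) = dotp a b := by
  simp only [Te_apply, dotp_add_left, dotp_add_right, dotp_smul_left, dotp_smul_right, hv,
    mul_zero, add_zero]
  rw [dotp_comm v b, mul_comm]
  rw [add_assoc, zmod2_add_self, add_zero]

lemma Te_one (v : Fin n → ZMod 2) (hv : dotp v v = 0) :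
    Te v hv (fun _ => (1 : ZMod 2)) = fun _ => (1 : ZMod 2) := by
  have h1 : dotp (fun _ => (1 : ZMod 2)) v = 0 := by rw [← dotp_self_eq, hv]
  simp [Te_apply, h1]

/-- Mapping by an isometry fixing `1` preserves membership in `AsetX2`. -/
lemma mem_AsetX2_map {κ : ℕ} (g : (Fin n → ZMod 2) ≃ₗ[ZMod 2] (Fin n → ZMod 2))
    (hg : ∀ a b, dotp (g a) (g b) = dotp a b)
    (h1 : g (fun _ => (1 : ZMod 2)) = fun _ => (1 : ZMod 2))
    (x : Fin n → ZMod 2) (C : Submodule (ZMod 2) (Fin n → ZMod 2))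
    (hC : C ∈ AsetX2 n κ x) :
    C.map (g : (Fin n → ZMod 2) →ₗ[ZMod 2] (Fin n → ZMod 2)) ∈ AsetX2 n κ (g x) := by
  obtain ⟨⟨hone, hso, hrk⟩, hx⟩ := hC
  refine ⟨⟨?_, ?_, ?_⟩, ?_⟩
  · exact ⟨_, hone, h1⟩
  · rintro _ ⟨a, ha, rfl⟩ _ ⟨b, hb, rfl⟩
    show dotp (g b) (g a) = 0
    rw [hg]
    exact hso ha b hb
  · rw [LinearEquiv.finrank_map_eq]
    exact hrk
  · rintro _ ⟨a, ha, rfl⟩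
    show dotp (g a) (g x) = 0
    rw [hg]
    exact hx a ha

lemma ncard_AsetX2_map {κ : ℕ} (g : (Fin n → ZMod 2) ≃ₗ[ZMod 2] (Fin n → ZMod 2))
    (hg : ∀ a b, dotp (g a) (g b) = dotp a b)
    (h1 : g (fun _ => (1 : ZMod 2)) = fun _ => (1 : ZMod 2))
    (x : Fin n → ZMod 2) :
    (AsetX2 n κ x).ncard = (AsetX2 n κ (g x)).ncard := by
  have hg' : ∀ a b, dotp (g.symm a) (g.symm b) = dotp a b := by
    intro a b
    have := hg (g.symm a) (g.symm b)
    rw [g.apply_symm_apply, g.apply_symm_apply] at this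
    exact this.symm
  have h1' : g.symm (fun _ => (1 : ZMod 2)) = fun _ => (1 : ZMod 2) := by
    conv_lhs => rw [← h1]
    rw [g.symm_apply_apply]
  have hinj : Function.Injective
      (Submodule.map (g : (Fin n → ZMod 2) →ₗ[ZMod 2] (Fin n → ZMod 2))) :=
    Submodule.map_injective_of_injective g.injective
  have himg : Submodule.map (g : (Fin n → ZMod 2) →ₗ[ZMod 2] (Fin n → ZMod 2)) ''
      AsetX2 n κ x = AsetX2 n κ (g x) := by
    apply Set.eq_of_subset_of_subset
    · rintro _ ⟨C, hC, rfl⟩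
      exact mem_AsetX2_map g hg h1 x C hC
    · intro C hC
      refine ⟨C.map (g.symm : (Fin n → ZMod 2) →ₗ[ZMod 2] (Fin n → ZMod 2)), ?_, ?_⟩
      · have := mem_AsetX2_map g.symm hg' h1' (g x) C hC
        rwa [g.symm_apply_apply] at this
      · exact (Submodule.map_symm_eq_iff g).mp rfl
  rw [← himg, Set.ncard_image_of_injective _ hinj]

/-- For a non-constant vector there is an even-weight `a` with `x·a = 1`. -/
lemma exists_even_pairing (x : Fin n → ZMod 2) (hx0 : x ≠ 0)
    (hx1 : x ≠ fun _ => (1 : ZMod 2)) :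
    ∃ a : Fin n → ZMod 2, dotp a a = 0 ∧ dotp x a = 1 := by
  have hi : ∃ i, x i = 1 := by
    by_contra h
    push_neg at h
    exact hx0 (funext fun i => zmod2_ne_one _ (h i))
  have hj : ∃ j, x j = 0 := by
    by_contra h
    push_neg at h
    exact hx1 (funext fun j => zmod2_ne_zero _ (h j))
  obtain ⟨i, hi⟩ := hi
  obtain ⟨j, hj⟩ := hj
  have hij : i ≠ j := by rintro rfl; rw [hi] at hj; exact one_ne_zero hj
  refine ⟨Pi.single i 1 + Pi.single j 1, ?_, ?_⟩
  · rw [dotp_add_left, dotp_add_right, dotp_add_right, dotp_single, dotp_single,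
      dotp_single, dotp_single]
    simp only [Pi.single_apply, if_neg hij, if_neg hij.symm, if_pos rfl]
    decide
  · rw [dotp_add_right, dotp_single, dotp_single, hi, hj, add_zero]

lemma exists_z (x y : Fin n → ZMod 2) (hx0 : x ≠ 0) (hx1 : x ≠ fun _ => (1 : ZMod 2))
    (hy0 : y ≠ 0) (hy1 : y ≠ fun _ => (1 : ZMod 2)) :
    ∃ z : Fin n → ZMod 2, dotp z z = 0 ∧ dotp x z = 1 ∧ dotp y z = 1 := by
  obtain ⟨a, haa, hxa⟩ := exists_even_pairing x hx0 hx1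
  obtain ⟨b, hbb, hyb⟩ := exists_even_pairing y hy0 hy1
  by_cases hya : dotp y a = 1
  · exact ⟨a, haa, hxa, hya⟩
  by_cases hxb : dotp x b = 1
  · exact ⟨b, hbb, hxb, hyb⟩
  have hya0 : dotp y a = 0 := zmod2_ne_one _ hya
  have hxb0 : dotp x b = 0 := zmod2_ne_one _ hxb
  refine ⟨a + b, ?_, ?_, ?_⟩
  · rw [dotp_add_left, dotp_add_right, dotp_add_right, haa, hbb, dotp_comm b a]
    rw [zero_add, add_zero, zmod2_add_self]
  · rw [dotp_add_right, hxa, hxb0, add_zero]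
  · rw [dotp_add_right, hya0, hyb, zero_add]

end Stmt10aux

open Stmt10aux in
theorem stmt_10 (n κ : ℕ) (hn : 2 ≤ n) (hne : Even n) (hκ0 : 0 < κ) (hκ : 2 * κ ≤ n)
    (x y : Fin n → ZMod 2)
    (hxx : dotp x x = 0) (hyy : dotp y y = 0)
    (hx0 : x ≠ 0) (hx1 : x ≠ fun _ => (1 : ZMod 2))
    (hy0 : y ≠ 0) (hy1 : y ≠ fun _ => (1 : ZMod 2)) :
    (AsetX2 n κ x).ncard = (AsetX2 n κ y).ncard := by
  obtain ⟨z, hzz, hxz, hyz⟩ := exists_z x y hx0 hx1 hy0 hy1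
  have hv1 : dotp (x + z) (x + z) = 0 := by
    rw [dotp_add_left, dotp_add_right, dotp_add_right, hxx, hzz, dotp_comm z x, hxz]
    rw [zero_add, add_zero, zmod2_add_self]
  have hv2 : dotp (z + y) (z + y) = 0 := by
    rw [dotp_add_left, dotp_add_right, dotp_add_right, hzz, hyy, dotp_comm z y, hyz]
    rw [zero_add, add_zero, zmod2_add_self]
  set g := (Te (x + z) hv1).trans (Te (z + y) hv2) with hgdef
  have hg : ∀ a b, dotp (g a) (g b) = dotp a b := by
    intro a b
    simp only [hgdef, LinearEquiv.trans_apply]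
    rw [Te_dotp, Te_dotp]
  have h1 : g (fun _ => (1 : ZMod 2)) = fun _ => (1 : ZMod 2) := by
    simp only [hgdef, LinearEquiv.trans_apply]
    rw [Te_one, Te_one]
  have hgx : g x = y := by
    have hstep1 : Te (x + z) hv1 x = z := by
      rw [Te_apply, dotp_add_right, hxx, hxz, zero_add, one_smul]
      funext i
      simp only [Pi.add_apply]
      rw [← add_assoc, zmod2_add_self, zero_add]
    have hz2 : dotp z (z + y) = 1 := by
      rw [dotp_add_right, hzz, zero_add, dotp_comm z y, hyz]
    have hstep2 : Te (z + y) hv2 z = y := by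
      rw [Te_apply, hz2, one_smul]
      funext i
      simp only [Pi.add_apply]
      rw [← add_assoc, zmod2_add_self, zero_add]
    simp only [hgdef, LinearEquiv.trans_apply, hstep1, hstep2]
  have := ncard_AsetX2_map (κ := κ) g hg h1 x
  rwa [hgx] at this

end
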